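/- arXiv:2504.20161 — 8 statements merged into one kernel-verified Lean document; each statement's English description precedes it below -/
import Mathlib

section
/- Let n ≥ 1 and let x, y ∈ ℝ^n be two vectors whose entries are sorted in nonincreasing order (x_1 ≥ x_2 ≥ … ≥ x_n and y_1 ≥ y_2 ≥ … ≥ y_n). Then for every permutation σ of {1,…,n} it holds that Σ_{i=1}^n min(x_i, y_i) ≥ Σ_{i=1}^n min(x_i, y_{σ(i)}). -/
open Equiv Equiv.Perm Finset Function

private lemma min_exchange {a b c d : ℝ} (hba : b ≤ a) (hdc : d ≤ c) :
    min a d + min b c ≤ min a c + min b d := by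
  rcases le_total a c with h | h <;> rcases le_total b d with h' | h' <;>
    rcases le_total a d with h'' | h'' <;> rcases le_total b c with h''' | h''' <;>
    simp [_root_.min_def] <;> split_ifs <;> linarith

private lemma perm_apply_inv_self {ι : Type*} (σ : Perm ι) (a : ι) : σ (σ⁻¹ a) = a :=
  (Equiv.eq_symm_apply σ).mp rfl

private theorem min_rearrange {ι : Type*} {s : Finset ι} {σ : Perm ι} {f g : ι → ℝ}
    (hfg : MonovaryOn f g s) (hσ : {x | σ x ≠ x} ⊆ s) :
    ∑ i ∈ s, min (f i) (g (σ i)) ≤ ∑ i ∈ s, min (f i) (g i) := by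
  classical
  revert hσ σ hfg
  refine Finset.induction_on_max_value (fun i ↦ toLex (g i, f i))
    (motive := fun t ↦ ∀ {σ : Perm ι}, MonovaryOn f g t → {x | σ x ≠ x} ⊆ t →
      ∑ i ∈ t, min (f i) (g (σ i)) ≤ ∑ i ∈ t, min (f i) (g i)) s ?_ ?_
  · simp only [le_rfl, Finset.sum_empty, imp_true_iff]
  intro a s has hamax hind σ hfg hσ
  set τ : Perm ι := σ.trans (swap a (σ a)) with hτ
  have hτs : {x | τ x ≠ x} ⊆ s := by
    intro x hx
    simp only [τ, Ne, Set.mem_setOf_eq, Equiv.coe_trans, Equiv.swap_comp_apply] at hx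
    split_ifs at hx with h₁ h₂
    · obtain rfl | hax := eq_or_ne x a
      · contradiction
      · exact mem_of_mem_insert_of_ne (hσ fun h ↦ hax <| h.symm.trans h₁) hax
    · exact (hx <| σ.injective h₂.symm).elim
    · exact mem_of_mem_insert_of_ne (hσ hx) (ne_of_apply_ne _ h₂)
  specialize hind (hfg.subset <| subset_insert _ _) hτs
  simp_rw [sum_insert has]
  refine le_trans ?_ (add_le_add_right hind _)
  obtain hσa | hσa := eq_or_ne a (σ a)
  · rw [hτ, ← hσa, swap_self, trans_refl]
  have h1s : σ⁻¹ a ∈ s := by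
    rw [Ne, ← inv_eq_iff_eq] at hσa
    refine mem_of_mem_insert_of_ne (hσ fun h ↦ hσa ?_) hσa
    rwa [perm_apply_inv_self, eq_comm] at h
  simp only [← s.sum_erase_add _ h1s, add_comm]
  rw [← add_assoc, ← add_assoc]
  simp only [hτ, swap_apply_left, Function.comp_apply, Equiv.coe_trans, perm_apply_inv_self]
  refine add_le_add (min_exchange ?_ ?_) (sum_congr rfl fun x hx ↦ ?_).le
  · specialize hamax (σ⁻¹ a) h1s
    rw [Prod.Lex.le_iff] at hamax
    cases' hamax with hamax hamax
    · exact hfg (mem_insert_of_mem h1s) (mem_insert_self _ _) hamax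
    · exact hamax.2
  · specialize hamax (σ a) (mem_of_mem_insert_of_ne (hσ <| σ.injective.ne hσa.symm) hσa.symm)
    rw [Prod.Lex.le_iff] at hamax
    cases' hamax with hamax hamax
    · exact hamax.le
    · exact hamax.1.le
  · rw [mem_erase, Ne, eq_inv_iff_eq] at hx
    rw [swap_apply_of_ne_of_ne hx.1 (σ.injective.ne _)]
    rintro rfl
    exact has hx.2

/-- **Rearrangement inequality for minima.**
If `x, y : Fin n → ℝ` (with `n ≥ 1`) are both sorted in nonincreasing order,
then for every permutation `σ` of `Fin n`,
`∑ i, min (x i) (y i) ≥ ∑ i, min (x i) (y (σ i))`. -/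
theorem min_sum_rearrangement (n : ℕ) (hn : 1 ≤ n) (x y : Fin n → ℝ)
    (hx : Antitone x) (hy : Antitone y) (σ : Equiv.Perm (Fin n)) :
    ∑ i, min (x i) (y (σ i)) ≤ ∑ i, min (x i) (y i) := by
  exact min_rearrange ((hx.monovary hy).monovaryOn _) (by simp)
end

section
/- Let U and U' be two n×m matrices with entries in [0,1] whose rows each sum to 1. Then there exists k ∈ {0,1,…,m−1} such that, for the cyclic column shift σ(j) = ((j + k − 1) mod m) + 1, it holds that Σ_{i∈[n]} Σ_{j∈[m]} min(U_{i,j}, U'_{i,σ(j)}) ≥ n/m. -/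
/-- For two row-stochastic `n × m` matrices `U, U'` with entries in `[0,1]`
(each row summing to `1`), there is a cyclic column shift `j ↦ j + k`
(addition in `Fin m`, i.e. mod `m`) such that
`∑ᵢ∑ⱼ min (U i j) (U' i (j + k)) ≥ n / m`. -/
theorem exists_cyclic_shift_min_sum_ge (n m : ℕ) (hm : 0 < m)
    (U U' : Matrix (Fin n) (Fin m) ℝ)
    (hU0 : ∀ i j, 0 ≤ U i j) (hU1 : ∀ i j, U i j ≤ 1)
    (hU'0 : ∀ i j, 0 ≤ U' i j) (hU'1 : ∀ i j, U' i j ≤ 1)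
    (hUrow : ∀ i, ∑ j, U i j = 1) (hU'row : ∀ i, ∑ j, U' i j = 1) :
    ∃ k : Fin m, (n : ℝ) / (m : ℝ) ≤ ∑ i, ∑ j, min (U i j) (U' i (j + k)) := by
  haveI : NeZero m := ⟨hm.ne'⟩
  have key : (n : ℝ) ≤ ∑ k : Fin m, ∑ i, ∑ j, min (U i j) (U' i (j + k)) := by
    have h1 : (n : ℝ) = ∑ i : Fin n, ∑ j : Fin m, ∑ k : Fin m, U i j * U' i (j + k) := by
      have : ∀ i : Fin n, ∑ j : Fin m, ∑ k : Fin m, U i j * U' i (j + k) = 1 := by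
        intro i
        have : ∀ j : Fin m, ∑ k : Fin m, U i j * U' i (j + k) = U i j := by
          intro j
          rw [← Finset.mul_sum]
          have : ∑ k : Fin m, U' i (j + k) = ∑ k : Fin m, U' i k :=
            Fintype.sum_equiv (Equiv.addLeft j) _ _ (fun k => rfl)
          rw [this, hU'row i, mul_one]
        simp only [this, hUrow i]
      simp [this]
    rw [h1]
    rw [Finset.sum_comm (s := Finset.univ) (t := Finset.univ)
      (f := fun k i => ∑ j, min (U i j) (U' i (j + k)))]
    apply Finset.sum_le_sum; intro i _
    rw [Finset.sum_comm]
    apply Finset.sum_le_sum; intro k _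
    apply Finset.sum_le_sum; intro j _
    rcases le_total (U i j) (U' i (j + k)) with h | h
    · rw [min_eq_left h]
      nlinarith [hU0 i j, hU'1 i (j + k)]
    · rw [min_eq_right h]
      nlinarith [hU'0 i (j + k), hU1 i j]
  by_contra hcon
  push_neg at hcon
  have : ∑ k : Fin m, ∑ i, ∑ j, min (U i j) (U' i (j + k)) < ∑ k : Fin m, (n : ℝ) / m :=
    Finset.sum_lt_sum_of_nonempty Finset.univ_nonempty (fun k _ => hcon k)
  rw [Finset.sum_const, Finset.card_univ, Fintype.card_fin, nsmul_eq_mul,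
    mul_div_cancel₀ _ (by positivity : (m : ℝ) ≠ 0)] at this
  linarith
end

section
/- Let U and U' be two n×m matrices with nonnegative entries whose rows each sum to 1. Then the valuation distance satisfies d_v(U, U') ≤ 2n − 2n/m; that is, there exist bijections π_a : [n] → [n] and π_g : [m] → [m] with Σ_{i∈[n]} Σ_{j∈[m]} |U_{i,j} − U'_{π_a(i), π_g(j)}| ≤ 2n − 2n/m. -/
/-- **Upper bound on the valuation distance.**
For two row-stochastic `n × m` matrices `U, U'` (nonnegative entries, rows summing
to `1`), there are bijections `π_a` of the agents and `π_g` of the goods with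
`∑ᵢ∑ⱼ |U i j − U' (π_a i) (π_g j)| ≤ 2n − 2n/m`; hence `d_v(U,U') ≤ 2n − 2n/m`. -/
theorem valuation_distance_le (n m : ℕ)
    (U U' : Matrix (Fin n) (Fin m) ℝ)
    (hU : ∀ i j, 0 ≤ U i j) (hU' : ∀ i j, 0 ≤ U' i j)
    (hUrow : ∀ i, ∑ j, U i j = 1) (hU'row : ∀ i, ∑ j, U' i j = 1) :
    ∃ (πa : Equiv.Perm (Fin n)) (πg : Equiv.Perm (Fin m)),
      ∑ i, ∑ j, |U i j - U' (πa i) (πg j)| ≤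
        2 * (n : ℝ) - 2 * (n : ℝ) / (m : ℝ) := by
  rcases Nat.eq_zero_or_pos m with hm | hm
  · subst hm
    rcases Nat.eq_zero_or_pos n with hn | hn
    · subst hn
      refine ⟨1, 1, ?_⟩
      simp
    · exact absurd (hUrow ⟨0, hn⟩) (by simp)
  · haveI : NeZero m := ⟨hm.ne'⟩
    -- entries are at most 1
    have hUle : ∀ i j, U i j ≤ 1 := fun i j => by
      rw [← hUrow i]
      exact Finset.single_le_sum (fun k _ => hU i k) (Finset.mem_univ j)
    have hU'le : ∀ i j, U' i j ≤ 1 := fun i j => by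
      rw [← hU'row i]
      exact Finset.single_le_sum (fun k _ => hU' i k) (Finset.mem_univ j)
    -- define g c = total overlap under shift c
    set g : Fin m → ℝ := fun c => ∑ i, ∑ j, min (U i j) (U' i (c + j)) with hg
    have hsum : (n : ℝ) ≤ ∑ c, g c := by
      have : ∑ c, g c = ∑ i : Fin n, ∑ j : Fin m, ∑ k : Fin m, min (U i j) (U' i k) := by
        rw [hg, Finset.sum_comm]
        refine Finset.sum_congr rfl fun i _ => ?_
        rw [Finset.sum_comm]
        refine Finset.sum_congr rfl fun j _ => ?_
        exact Fintype.sum_equiv (Equiv.addRight j)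
          (fun c => min (U i j) (U' i (c + j))) (fun k => min (U i j) (U' i k))
          (fun c => rfl)
      rw [this]
      calc (n : ℝ) = ∑ _i : Fin n, (1 : ℝ) := by simp
        _ ≤ _ := by
          refine Finset.sum_le_sum fun i _ => ?_
          calc (1 : ℝ) = (∑ j, U i j) * (∑ k, U' i k) := by rw [hUrow, hU'row]; ring
            _ = ∑ j, ∑ k, U i j * U' i k := by rw [Finset.sum_mul_sum]
            _ ≤ ∑ j, ∑ k, min (U i j) (U' i k) := by
                refine Finset.sum_le_sum fun j _ => Finset.sum_le_sum fun k _ => ?_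
                rcases le_total (U i j) (U' i k) with h | h
                · rw [min_eq_left h]
                  nlinarith [hU i j, hU' i k, hU'le i k]
                · rw [min_eq_right h]
                  nlinarith [hU i j, hU' i k, hUle i j]
    -- pick a good shift
    have hex : ∃ c : Fin m, (n : ℝ) / m ≤ g c := by
      by_contra hcon
      push_neg at hcon
      have : ∑ c, g c < ∑ _c : Fin m, (n : ℝ) / m :=
        Finset.sum_lt_sum_of_nonempty (Finset.univ_nonempty) (fun c _ => hcon c)
      rw [Finset.sum_const, Finset.card_univ, Fintype.card_fin, nsmul_eq_mul,
        mul_div_cancel₀] at this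
      · linarith
      · exact_mod_cast hm.ne'
    obtain ⟨c, hc⟩ := hex
    refine ⟨1, Equiv.addLeft c, ?_⟩
    have key : ∑ i, ∑ j, |U i j - U' ((1 : Equiv.Perm (Fin n)) i) (Equiv.addLeft c j)|
        = 2 * n - 2 * g c := by
      have : ∀ i j, |U i j - U' i (c + j)|
          = U i j + U' i (c + j) - 2 * min (U i j) (U' i (c + j)) := by
        intro i j
        rcases le_total (U i j) (U' i (c + j)) with h | h
        · rw [min_eq_left h, abs_of_nonpos (by linarith)]; ring
        · rw [min_eq_right h, abs_of_nonneg (by linarith)]; ring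
      simp only [Equiv.Perm.coe_one, id_eq, Equiv.coe_addLeft]
      rw [hg]
      simp only [this]
      rw [show (2 : ℝ) * n - 2 * ∑ i, ∑ j, min (U i j) (U' i (c + j))
          = ∑ i : Fin n, ((1 : ℝ) + 1 - 2 * ∑ j, min (U i j) (U' i (c + j))) by
        rw [Finset.sum_sub_distrib]; simp [Finset.mul_sum]; ring]
      refine Finset.sum_congr rfl fun i _ => ?_
      rw [Finset.sum_sub_distrib, Finset.sum_add_distrib, hUrow i, ← Finset.mul_sum]
      have : ∑ j, U' i (c + j) = 1 := by
        rw [← hU'row i]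
        exact Fintype.sum_equiv (Equiv.addLeft c) _ _ (fun j => rfl)
      rw [this]
    rw [key, mul_div_assoc]
    have hmn : (n : ℝ) / m ≤ g c := hc
    linarith
end

section
/- Let U and U' be two n×m matrices with nonnegative entries whose rows each sum to 1. Then the demand distance is at most the valuation distance: d_d(U, U') ≤ d_v(U, U'). -/
open Equiv Finset

private lemma exchange_abs (a b c d : ℝ) (hab : a ≤ b) (hcd : c ≤ d) :
    |a - c| + |b - d| ≤ |a - d| + |b - c| := by
  rcases abs_cases (a - c) with ⟨h1, _⟩ | ⟨h1, _⟩ <;>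
  rcases abs_cases (b - d) with ⟨h2, _⟩ | ⟨h2, _⟩ <;>
  rcases abs_cases (a - d) with ⟨h3, h3'⟩ | ⟨h3, h3'⟩ <;>
  rcases abs_cases (b - c) with ⟨h4, h4'⟩ | ⟨h4, h4'⟩ <;>
  linarith

/-- Pairing two monotone sequences in order minimizes the ℓ¹-matching cost. -/
private lemma sorted_pairing_min : ∀ (n : ℕ) (f g : Fin n → ℝ), Monotone f → Monotone g →
    ∀ σ : Equiv.Perm (Fin n), ∑ i, |f i - g i| ≤ ∑ i, |f i - g (σ i)| := by
  intro n
  induction n with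
  | zero => intro f g _ _ σ; simp
  | succ n ih =>
    intro f g hf hg σ
    set k : Fin (n + 1) := σ⁻¹ 0 with hk
    set τ : Equiv.Perm (Fin (n + 1)) := σ * Equiv.swap 0 k with hτ
    have hτ0 : τ 0 = 0 := by
      simp [hτ, Equiv.Perm.mul_apply, Equiv.swap_apply_left, hk]
    -- Step 1: the cost of τ is at most the cost of σ
    have step1 : ∑ i, |f i - g (τ i)| ≤ ∑ i, |f i - g (σ i)| := by
      have hre : ∑ i, |f i - g (σ i)| = ∑ i, |f (Equiv.swap 0 k i) - g (τ i)| := by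
        rw [← Equiv.sum_comp (Equiv.swap 0 k) (fun i => |f i - g (σ i)|)]
        refine Finset.sum_congr rfl fun i _ => ?_
        simp [hτ, Equiv.Perm.mul_apply]
      rw [hre, ← sub_nonneg, ← Finset.sum_sub_distrib]
      set h : Fin (n + 1) → ℝ :=
        fun i => |f (Equiv.swap 0 k i) - g (τ i)| - |f i - g (τ i)| with hh
      by_cases hk0 : k = 0
      · have : ∀ i, h i = 0 := by
          intro i; simp [hh, hk0, Equiv.swap_self]
        simp [Finset.sum_congr rfl fun i _ => this i]
      · have hsub : ∑ i, h i = ∑ i ∈ ({0, k} : Finset (Fin (n + 1))), h i := by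
          refine (Finset.sum_subset (Finset.subset_univ _) fun x _ hx => ?_).symm
          have hx0 : x ≠ 0 := by intro h'; exact hx (by simp [h'])
          have hxk : x ≠ k := by intro h'; exact hx (by simp [h'])
          simp [hh, Equiv.swap_apply_of_ne_of_ne hx0 hxk]
        rw [hsub, Finset.sum_pair (Ne.symm hk0)]
        have e1 : h 0 = |f k - g 0| - |f 0 - g 0| := by
          simp [hh, hτ0, Equiv.swap_apply_left]
        have e2 : h k = |f 0 - g (τ k)| - |f k - g (τ k)| := by
          simp [hh, Equiv.swap_apply_right]
        rw [e1, e2]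
        have := exchange_abs (f 0) (f k) (g 0) (g (τ k))
          (hf (Fin.zero_le k)) (hg (Fin.zero_le (τ k)))
        linarith
    -- Step 2: τ fixes 0, so it decomposes
    refine le_trans ?_ step1
    set pe := Equiv.Perm.decomposeFin τ with hpe
    set p := pe.1 with hp1
    set e := pe.2 with hp2
    have hτeq : τ = Equiv.Perm.decomposeFin.symm (p, e) := by
      rw [hp1, hp2]
      rw [show (pe.1, pe.2) = pe from rfl, hpe]
      exact (Equiv.symm_apply_apply _ τ).symm
    have hp : p = 0 := by
      have := Equiv.Perm.decomposeFin_symm_apply_zero p e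
      rw [← hτeq, hτ0] at this; exact this.symm
    have hsucc : ∀ x : Fin n, τ x.succ = (e x).succ := by
      intro x
      rw [hτeq, Equiv.Perm.decomposeFin_symm_apply_succ, hp, Equiv.swap_self]
      rfl
    rw [Fin.sum_univ_succ, Fin.sum_univ_succ, hτ0]
    have hmono : ∀ (u : Fin (n+1) → ℝ), Monotone u → Monotone (fun x : Fin n => u x.succ) :=
      fun u hu => hu.comp Fin.strictMono_succ.monotone
    have := ih (fun x => f x.succ) (fun x => g x.succ) (hmono f hf) (hmono g hg) e
    have hsum : ∑ x : Fin n, |f x.succ - g (τ x.succ)|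
        = ∑ x : Fin n, |f x.succ - g ((e x).succ)| :=
      Finset.sum_congr rfl fun x _ => by rw [hsucc x]
    rw [hsum]
    linarith

/-- Per-column lemma: the ℓ¹ distance between sorted columns is at most the
ℓ¹ distance between columns matched by any agent permutation. -/
private lemma col_sorted_le {n : ℕ} (x y : Fin n → ℝ) (σ : Equiv.Perm (Fin n)) :
    ∑ i, |x (Tuple.sort x i) - y (Tuple.sort y i)| ≤ ∑ i, |x i - y (σ i)| := by
  have hmx := Tuple.monotone_sort x
  have hmy := Tuple.monotone_sort y
  have hre : ∑ i, |x i - y (σ i)|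
      = ∑ i, |x (Tuple.sort x i) - y (σ (Tuple.sort x i))| := by
    rw [← Equiv.sum_comp (Tuple.sort x) (fun i => |x i - y (σ i)|)]
  rw [hre]
  have := sorted_pairing_min n (fun i => x (Tuple.sort x i)) (fun i => y (Tuple.sort y i))
    hmx hmy ((Tuple.sort y)⁻¹ * σ * Tuple.sort x)
  simpa [Equiv.Perm.mul_apply] using this

/-- The valuation distance: the minimum over all permutations of agents and goods
of the entrywise ℓ¹ distance between the permuted utility matrices. -/
noncomputable def valDist {n m : ℕ} (U U' : Matrix (Fin n) (Fin m) ℝ) : ℝ :=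
  ⨅ p : Equiv.Perm (Fin n) × Equiv.Perm (Fin m),
    ∑ i, ∑ j, |U i j - U' (p.1 i) (p.2 j)|

/-- The demand vector of good `j`: the `j`-th column of `U`, sorted in
nonincreasing order (obtained by composing the nondecreasing sorting permutation
with the order-reversal of `Fin n`). -/
noncomputable def dem {n m : ℕ} (U : Matrix (Fin n) (Fin m) ℝ) (j : Fin m) :
    Fin n → ℝ :=
  fun i => U (Tuple.sort (fun i' => U i' j) i.rev) j

/-- The demand distance: the minimum over all permutations of the goods of the
sum of ℓ¹ distances between matched demand vectors. -/
noncomputable def demDist {n m : ℕ} (U U' : Matrix (Fin n) (Fin m) ℝ) : ℝ :=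
  ⨅ π : Equiv.Perm (Fin m), ∑ j, ∑ i, |dem U j i - dem U' (π j) i|

/-- **The demand distance is at most the valuation distance** for any two
row-stochastic `n × m` matrices. -/
theorem demDist_le_valDist (n m : ℕ) (U U' : Matrix (Fin n) (Fin m) ℝ)
    (hU : ∀ i j, 0 ≤ U i j) (hU' : ∀ i j, 0 ≤ U' i j)
    (hUrow : ∀ i, ∑ j, U i j = 1) (hU'row : ∀ i, ∑ j, U' i j = 1) :
    demDist U U' ≤ valDist U U' := by
  refine le_ciInf fun p => ?_
  obtain ⟨σ, π⟩ := p
  have hbdd : BddBelow (Set.range fun π : Equiv.Perm (Fin m) =>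
      ∑ j, ∑ i, |dem U j i - dem U' (π j) i|) :=
    (Set.finite_range _).bddBelow
  refine le_trans (ciInf_le hbdd π) ?_
  conv_rhs => rw [Finset.sum_comm]
  refine Finset.sum_le_sum fun j _ => ?_
  -- per column
  have hrev : ∑ i, |dem U j i - dem U' (π j) i|
      = ∑ i, |U (Tuple.sort (fun i' => U i' j) i) j
          - U' (Tuple.sort (fun i' => U' i' (π j)) i) (π j)| := by
    rw [← Equiv.sum_comp (Fin.revPerm) (fun i => |dem U j i - dem U' (π j) i|)]
    refine Finset.sum_congr rfl fun i _ => ?_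
    simp [dem, Fin.revPerm]
  rw [hrev]
  exact col_sorted_le (fun i' => U i' j) (fun i' => U' i' (π j)) σ
end

section
/- Let U and U' be two n×m matrices with nonnegative entries whose rows each sum to 1. Then the demand distance satisfies d_d(U, U') ≤ 2n − 2n/m. -/
section Aux

variable {n m : ℕ}

lemma sum_dem (U : Matrix (Fin n) (Fin m) ℝ) (j : Fin m) :
    ∑ i, dem U j i = ∑ i, U i j :=
  Fintype.sum_equiv (Fin.revPerm.trans (Tuple.sort (fun i' => U i' j)))
    (dem U j) (fun i' => U i' j) (fun _ => rfl)

lemma dem_antitone (U : Matrix (Fin n) (Fin m) ℝ) (j : Fin m) :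
    Antitone (dem U j) := by
  intro i i' h
  exact Tuple.monotone_sort (fun i' => U i' j) (Fin.rev_le_rev.mpr h)

lemma dem_nonneg (U : Matrix (Fin n) (Fin m) ℝ) (hU : ∀ i j, 0 ≤ U i j)
    (j : Fin m) (i : Fin n) : 0 ≤ dem U j i := hU _ _

lemma dem_le_one (U : Matrix (Fin n) (Fin m) ℝ) (hU : ∀ i j, 0 ≤ U i j)
    (hUrow : ∀ i, ∑ j, U i j = 1) (j : Fin m) (i : Fin n) : dem U j i ≤ 1 := by
  rw [show (1 : ℝ) = ∑ j', U (Tuple.sort (fun i' => U i' j) i.rev) j' from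
    (hUrow _).symm]
  exact Finset.single_le_sum (fun j' _ => hU _ j') (Finset.mem_univ j)

lemma abs_sub_le_aux {a b : ℝ} (ha0 : 0 ≤ a) (ha1 : a ≤ 1) (hb0 : 0 ≤ b)
    (hb1 : b ≤ 1) : |a - b| ≤ a + b - 2 * (a * b) := by
  rcases abs_cases (a - b) with ⟨h, _⟩ | ⟨h, _⟩ <;> rw [h] <;> nlinarith

end Aux

/-- **Upper bound on the demand distance:** for two row-stochastic `n × m`
matrices `U, U'`, `d_d(U, U') ≤ 2n − 2n/m`. -/
theorem demDist_le (n m : ℕ) (U U' : Matrix (Fin n) (Fin m) ℝ)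
    (hU : ∀ i j, 0 ≤ U i j) (hU' : ∀ i j, 0 ≤ U' i j)
    (hUrow : ∀ i, ∑ j, U i j = 1) (hU'row : ∀ i, ∑ j, U' i j = 1) :
    demDist U U' ≤ 2 * (n : ℝ) - 2 * (n : ℝ) / (m : ℝ) := by
  have hbdd : BddBelow (Set.range fun π : Equiv.Perm (Fin m) =>
      ∑ j, ∑ i, |dem U j i - dem U' (π j) i|) := by
    refine ⟨0, ?_⟩
    rintro x ⟨π, rfl⟩
    exact Finset.sum_nonneg fun j _ => Finset.sum_nonneg fun i _ => abs_nonneg _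
  rcases Nat.eq_zero_or_pos m with hm | hm
  · subst hm
    have h0 : demDist U U' = 0 := by unfold demDist; simp
    rw [h0]
    simp only [Nat.cast_zero, div_zero, sub_zero]
    positivity
  haveI : NeZero m := ⟨hm.ne'⟩
  set A : Fin n → ℝ := fun i => ∑ j, dem U j i with hA
  set B : Fin n → ℝ := fun i => ∑ j, dem U' j i with hB
  have e1 : ∑ j, ∑ i, dem U j i = (n : ℝ) := by
    calc ∑ j, ∑ i, dem U j i = ∑ j : Fin m, ∑ i, U i j :=
          Finset.sum_congr rfl fun j _ => sum_dem U j
      _ = ∑ i, ∑ j, U i j := Finset.sum_comm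
      _ = (n : ℝ) := by simp [hUrow]
  have e2 : ∑ j, ∑ i, dem U' j i = (n : ℝ) := by
    calc ∑ j, ∑ i, dem U' j i = ∑ j : Fin m, ∑ i, U' i j :=
          Finset.sum_congr rfl fun j _ => sum_dem U' j
      _ = ∑ i, ∑ j, U' i j := Finset.sum_comm
      _ = (n : ℝ) := by simp [hU'row]
  have hAsum : ∑ i, A i = (n : ℝ) := by rw [← e1]; exact Finset.sum_comm
  have hBsum : ∑ i, B i = (n : ℝ) := by rw [← e2]; exact Finset.sum_comm
  have hAanti : Antitone A := fun i i' h =>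
    Finset.sum_le_sum fun j _ => dem_antitone U j h
  have hBanti : Antitone B := fun i i' h =>
    Finset.sum_le_sum fun j _ => dem_antitone U' j h
  -- Chebyshev's sum inequality
  have hcheb : (n : ℝ) ≤ ∑ i, A i * B i := by
    rcases Nat.eq_zero_or_pos n with hn | hn
    · subst hn; simp
    have hc := (hAanti.monovary hBanti).sum_mul_sum_le_card_mul_sum
    rw [hAsum, hBsum] at hc
    simp only [Finset.card_univ, Fintype.card_fin] at hc
    have hn' : (0 : ℝ) < n := by exact_mod_cast hn
    nlinarith [hc]
  have hm' : (0 : ℝ) < m := by exact_mod_cast hm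
  -- the three triple sums
  have T1 : ∑ j : Fin m, ∑ _j' : Fin m, ∑ i, dem U j i = (m : ℝ) * n := by
    simp only [Finset.sum_const, Finset.card_univ, Fintype.card_fin, nsmul_eq_mul]
    rw [← Finset.mul_sum, e1]
  have T2 : ∑ _j : Fin m, ∑ j' : Fin m, ∑ i, dem U' j' i = (m : ℝ) * n := by
    rw [Finset.sum_const, Finset.card_univ, Fintype.card_fin, nsmul_eq_mul, e2]
  have T3 : ∑ j : Fin m, ∑ j' : Fin m, ∑ i, dem U j i * dem U' j' i
      = ∑ i, A i * B i := by
    have step : ∀ j : Fin m, ∑ j' : Fin m, ∑ i, dem U j i * dem U' j' i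
        = ∑ i, dem U j i * B i := by
      intro j
      rw [Finset.sum_comm]
      exact Finset.sum_congr rfl fun i _ => (Finset.mul_sum _ _ _).symm
    calc ∑ j : Fin m, ∑ j' : Fin m, ∑ i, dem U j i * dem U' j' i
        = ∑ j : Fin m, ∑ i, dem U j i * B i :=
          Finset.sum_congr rfl fun j _ => step j
      _ = ∑ i, ∑ j : Fin m, dem U j i * B i := Finset.sum_comm
      _ = ∑ i, A i * B i :=
          Finset.sum_congr rfl fun i _ => (Finset.sum_mul _ _ _).symm
  -- sum over all cyclic shifts
  have hkey : ∑ k : Fin m, ∑ j, ∑ i, |dem U j i - dem U' (Equiv.addLeft k j) i|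
      ≤ ∑ _k : Fin m, (2 * (n : ℝ) - 2 * (n : ℝ) / (m : ℝ)) := by
    rw [Finset.sum_comm]
    calc ∑ j, ∑ k : Fin m, ∑ i, |dem U j i - dem U' (Equiv.addLeft k j) i|
        = ∑ j, ∑ j', ∑ i, |dem U j i - dem U' j' i| :=
          Finset.sum_congr rfl fun j _ =>
            Fintype.sum_equiv (Equiv.addRight j) _ _ (fun k => rfl)
      _ ≤ ∑ j, ∑ j', ∑ i,
            (dem U j i + dem U' j' i - 2 * (dem U j i * dem U' j' i)) := by
          refine Finset.sum_le_sum fun j _ => Finset.sum_le_sum fun j' _ =>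
            Finset.sum_le_sum fun i _ => ?_
          exact abs_sub_le_aux (dem_nonneg U hU j i) (dem_le_one U hU hUrow j i)
            (dem_nonneg U' hU' j' i) (dem_le_one U' hU' hU'row j' i)
      _ = (m : ℝ) * n + (m : ℝ) * n - 2 * ∑ i, A i * B i := by
          simp only [Finset.sum_add_distrib, Finset.sum_sub_distrib,
            ← Finset.mul_sum]
          rw [T1, T2, T3]
      _ ≤ (m : ℝ) * n + (m : ℝ) * n - 2 * n := by linarith
      _ = ∑ _k : Fin m, (2 * (n : ℝ) - 2 * (n : ℝ) / (m : ℝ)) := by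
          rw [Finset.sum_const, Finset.card_univ, Fintype.card_fin, nsmul_eq_mul]
          field_simp
          ring
  obtain ⟨k, _, hk⟩ :=
    Finset.exists_le_of_sum_le ⟨(0 : Fin m), Finset.mem_univ _⟩ hkey
  calc demDist U U'
      ≤ ∑ j, ∑ i, |dem U j i - dem U' (Equiv.addLeft k j) i| :=
        ciInf_le hbdd (Equiv.addLeft k)
    _ ≤ _ := hk
end

section
/- There exist n, m and two n×m matrices U, U' with nonnegative entries whose rows each sum to 1, such that the demand distance d_d(U, U') equals 0 but U and U' are not isomorphic (i.e., there is no pair of bijections π_a : [n] → [n], π_g : [m] → [m] with U_{i,j} = U'_{π_a(i), π_g(j)} for all i, j). In particular, this holds for n = m = 4 with U being the matrix with rows (2,4,6,8), (3,3,6,8), (6,8,6,0), (8,6,0,6) each divided by 20, and U' being the matrix with rows (2,4,6,8), (3,3,6,8), (6,8,0,6), (8,6,6,0) each divided by 20. -/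
/-- The first witness matrix: rows (2,4,6,8), (3,3,6,8), (6,8,6,0), (8,6,0,6),
each divided by 20. -/
noncomputable def U₇ : Matrix (Fin 4) (Fin 4) ℝ :=
  (1 / 20 : ℝ) • !![2, 4, 6, 8; 3, 3, 6, 8; 6, 8, 6, 0; 8, 6, 0, 6]

/-- The second witness matrix: rows (2,4,6,8), (3,3,6,8), (6,8,0,6), (8,6,6,0),
each divided by 20. -/
noncomputable def U₇' : Matrix (Fin 4) (Fin 4) ℝ :=
  (1 / 20 : ℝ) • !![2, 4, 6, 8; 3, 3, 6, 8; 6, 8, 0, 6; 8, 6, 6, 0]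

/-- Integer version of `U₇`. -/
def Nmat7 : Matrix (Fin 4) (Fin 4) ℕ := !![2, 4, 6, 8; 3, 3, 6, 8; 6, 8, 6, 0; 8, 6, 0, 6]

/-- Integer version of `U₇'`. -/
def Nmat7' : Matrix (Fin 4) (Fin 4) ℕ := !![2, 4, 6, 8; 3, 3, 6, 8; 6, 8, 0, 6; 8, 6, 6, 0]

lemma U₇_eq : ∀ i j, U₇ i j = (Nmat7 i j : ℝ) / 20 := by
  intro i j; fin_cases i <;> fin_cases j <;> simp [U₇, Nmat7] <;> norm_num

lemma U₇'_eq : ∀ i j, U₇' i j = (Nmat7' i j : ℝ) / 20 := by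
  intro i j; fin_cases i <;> fin_cases j <;> simp [U₇', Nmat7'] <;> norm_num

set_option maxHeartbeats 4000000 in
lemma nat_not_iso : ¬ ∃ (πa : Equiv.Perm (Fin 4)) (πg : Equiv.Perm (Fin 4)),
    ∀ i j, Nmat7 i j = Nmat7' (πa i) (πg j) := by
  exact @of_decide_eq_true _ (@instDecidableNot _ (@Fintype.decidableExistsFintype _ _
    (fun πa => @Fintype.decidableExistsFintype _ _
      (fun πg => @Fintype.decidableForallFintype _ _ (fun i => inferInstance) _) _) _)) rfl

lemma sorted_col_aux (j : Fin 4) (hj : (fun i => U₇' i j) = (fun i => U₇ i j) ∘ (Equiv.swap (2 : Fin 4) 3)) :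
    (fun i => U₇ i j) ∘ Tuple.sort (fun i => U₇ i j) =
      (fun i => U₇' i j) ∘ Tuple.sort (fun i => U₇' i j) := by
  rw [hj, Tuple.comp_perm_comp_sort_eq_comp_sort]

lemma sorted_cols_eq (j : Fin 4) :
    (fun i => U₇ i j) ∘ Tuple.sort (fun i => U₇ i j) =
      (fun i => U₇' i j) ∘ Tuple.sort (fun i => U₇' i j) := by
  fin_cases j
  · have h : (fun i => U₇ i (0 : Fin 4)) = (fun i => U₇' i 0) := by
      funext i; fin_cases i <;> simp [U₇, U₇']
    exact h ▸ rfl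
  · have h : (fun i => U₇ i (1 : Fin 4)) = (fun i => U₇' i 1) := by
      funext i; fin_cases i <;> simp [U₇, U₇']
    exact h ▸ rfl
  · refine sorted_col_aux 2 ?_
    funext i
    fin_cases i <;>
      simp [U₇, U₇', Equiv.swap_apply_of_ne_of_ne, Equiv.swap_apply_left,
        Equiv.swap_apply_right]
  · refine sorted_col_aux 3 ?_
    funext i
    fin_cases i <;>
      simp [U₇, U₇', Equiv.swap_apply_of_ne_of_ne, Equiv.swap_apply_left,
        Equiv.swap_apply_right]

lemma dem_eq (j : Fin 4) (i : Fin 4) : dem U₇ j i = dem U₇' j i := by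
  have h := sorted_cols_eq j
  have := congrFun h i.rev
  simpa [dem, Function.comp] using this

/-- **The demand distance can vanish on non-isomorphic instances:** the two
concrete `4 × 4` row-stochastic matrices `U₇` and `U₇'` have demand distance `0`,
yet they are not isomorphic (no pair of row/column permutations transforms one
into the other). -/
theorem demDist_eq_zero_not_isomorphic :
    (∀ i j, 0 ≤ U₇ i j) ∧ (∀ i, ∑ j, U₇ i j = 1) ∧
    (∀ i j, 0 ≤ U₇' i j) ∧ (∀ i, ∑ j, U₇' i j = 1) ∧
    demDist U₇ U₇' = 0 ∧
    ¬ ∃ (πa : Equiv.Perm (Fin 4)) (πg : Equiv.Perm (Fin 4)),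
        ∀ i j, U₇ i j = U₇' (πa i) (πg j) := by
  refine ⟨?_, ?_, ?_, ?_, ?_, ?_⟩
  · intro i j; fin_cases i <;> fin_cases j <;> norm_num [U₇]
  · intro i; fin_cases i <;> norm_num [U₇, Fin.sum_univ_four, Matrix.cons_val_two, Matrix.cons_val_three]
  · intro i j; fin_cases i <;> fin_cases j <;> norm_num [U₇']
  · intro i; fin_cases i <;> norm_num [U₇', Fin.sum_univ_four, Matrix.cons_val_two, Matrix.cons_val_three]
  · -- demand distance is zero
    have hid : ∑ j, ∑ i, |dem U₇ j i - dem U₇' ((Equiv.refl (Fin 4)) j) i| = 0 := by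
      refine Finset.sum_eq_zero fun j _ => Finset.sum_eq_zero fun i _ => ?_
      simp [dem_eq j i]
    have key : ∀ π : Equiv.Perm (Fin 4),
        (0 : ℝ) ≤ ∑ j, ∑ i, |dem U₇ j i - dem U₇' (π j) i| :=
      fun π => Finset.sum_nonneg fun j _ => Finset.sum_nonneg fun i _ => abs_nonneg _
    rw [demDist]
    refine le_antisymm (le_trans (ciInf_le ⟨0, ?_⟩ (Equiv.refl (Fin 4))) (le_of_eq hid))
      (le_ciInf key)
    rintro x ⟨π, rfl⟩
    exact key π
  · rintro ⟨πa, πg, h⟩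
    refine nat_not_iso ⟨πa, πg, fun i j => ?_⟩
    have := h i j
    rw [U₇_eq, U₇'_eq] at this
    have h20 : (Nmat7 i j : ℝ) = (Nmat7' (πa i) (πg j) : ℝ) := by
      field_simp at this; exact_mod_cast this
    exact_mod_cast h20
end

section
/- Let m ≥ n ≥ 2 and let U be an n×m matrix with nonnegative entries whose rows each sum to 1. Then σ₁(U) = √(n/m) if and only if every column of U sums to n/m. -/
open Matrix in
lemma aux_symm_entries {m : ℕ} {A : Matrix (Fin m) (Fin m) ℝ} (hA : A.IsHermitian)
    (j k : Fin m) : A j k = A k j := by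
  conv_lhs => rw [← hA.eq]
  simp [Matrix.conjTranspose_apply]

open Matrix in
lemma aux_vecMul_eq {m : ℕ} {A : Matrix (Fin m) (Fin m) ℝ} (hA : A.IsHermitian)
    (x : Fin m → ℝ) : x ᵥ* A = A *ᵥ x := by
  ext j
  simp only [Matrix.vecMul, Matrix.mulVec, dotProduct]
  exact Finset.sum_congr rfl fun k _ => by rw [aux_symm_entries hA j k, mul_comm]

open Matrix in
lemma aux_repr_mulVec {m : ℕ} {A : Matrix (Fin m) (Fin m) ℝ} (hA : A.IsHermitian)
    (v : Fin m → ℝ) (i : Fin m) :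
    hA.eigenvectorBasis.repr ((WithLp.equiv 2 (Fin m → ℝ)).symm (A *ᵥ v)) i
      = hA.eigenvalues i *
        hA.eigenvectorBasis.repr ((WithLp.equiv 2 (Fin m → ℝ)).symm v) i := by
  rw [OrthonormalBasis.repr_apply_apply, OrthonormalBasis.repr_apply_apply]
  have h1 : ∀ w : Fin m → ℝ,
      (inner ℝ (hA.eigenvectorBasis i) ((WithLp.equiv 2 (Fin m → ℝ)).symm w) : ℝ)
        = (WithLp.equiv 2 (Fin m → ℝ)) (hA.eigenvectorBasis i) ⬝ᵥ w := by
    intro w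
    simp [PiLp.inner_apply, RCLike.inner_apply, dotProduct, mul_comm]
  rw [h1, h1, dotProduct_mulVec, aux_vecMul_eq hA]
  erw [Matrix.IsHermitian.mulVec_eigenvectorBasis hA i, smul_dotProduct]
  rfl

open Matrix in
lemma aux_dot_eq_sum_repr {m : ℕ} (B : OrthonormalBasis (Fin m) ℝ (EuclideanSpace ℝ (Fin m)))
    (v w : Fin m → ℝ) :
    v ⬝ᵥ w = ∑ i, B.repr ((WithLp.equiv 2 (Fin m → ℝ)).symm v) i *
      B.repr ((WithLp.equiv 2 (Fin m → ℝ)).symm w) i := by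
  have h : v ⬝ᵥ w =
      (inner ℝ ((WithLp.equiv 2 (Fin m → ℝ)).symm v) ((WithLp.equiv 2 (Fin m → ℝ)).symm w) : ℝ) := by
    simp [PiLp.inner_apply, RCLike.inner_apply, dotProduct, mul_comm]
  rw [h, ← B.repr.inner_map_map ((WithLp.equiv 2 (Fin m → ℝ)).symm v)
    ((WithLp.equiv 2 (Fin m → ℝ)).symm w)]
  simp only [PiLp.inner_apply, RCLike.inner_apply, starRingEnd_apply, star_trivial, mul_comm]


open Matrix in
lemma aux_row_bound {m : ℕ} {A : Matrix (Fin m) (Fin m) ℝ} (hsym : ∀ j k, A j k = A k j)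
    (hnn : ∀ j k, 0 ≤ A j k) {r : ℝ} (hrow : ∀ j, ∑ k, A j k = r) (w : Fin m → ℝ) :
    w ⬝ᵥ (A *ᵥ w) ≤ r * (w ⬝ᵥ w) := by
  have key : ∀ j k, w j * (A j k * w k) ≤ A j k * w j ^ 2 / 2 + A j k * w k ^ 2 / 2 := fun j k => by
    nlinarith [hnn j k, sq_nonneg (w j - w k), sq_nonneg (w j + w k)]
  calc w ⬝ᵥ (A *ᵥ w) = ∑ j, ∑ k, w j * (A j k * w k) := by
        simp [dotProduct, Matrix.mulVec, Finset.mul_sum]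
    _ ≤ ∑ j, ∑ k, (A j k * w j ^ 2 / 2 + A j k * w k ^ 2 / 2) :=
        Finset.sum_le_sum fun j _ => Finset.sum_le_sum fun k _ => key j k
    _ = (∑ j, ∑ k, A j k * w j ^ 2 / 2) + ∑ j, ∑ k, A j k * w k ^ 2 / 2 := by
        rw [← Finset.sum_add_distrib]
        exact Finset.sum_congr rfl fun j _ => Finset.sum_add_distrib
    _ = r * (w ⬝ᵥ w) := by
        have e1 : (∑ j, ∑ k, A j k * w j ^ 2 / 2) = ∑ j, r * (w j ^ 2 / 2) := by
          refine Finset.sum_congr rfl fun j _ => ?_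
          rw [← Finset.sum_div, ← Finset.sum_mul, hrow j]; ring
        have e2 : (∑ j : Fin m, ∑ k, A j k * w k ^ 2 / 2) = ∑ k, r * (w k ^ 2 / 2) := by
          rw [Finset.sum_comm]
          refine Finset.sum_congr rfl fun k _ => ?_
          have h3 : (∑ j, A j k) = r := by
            rw [← hrow k]; exact Finset.sum_congr rfl fun j _ => hsym j k
          rw [← Finset.sum_div, ← Finset.sum_mul, h3]; ring
        rw [e1, e2, ← Finset.sum_add_distrib]
        simp only [dotProduct, Finset.mul_sum]
        exact Finset.sum_congr rfl fun j _ => by ring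

open Matrix in
lemma aux_dot_mulVec_le {m : ℕ} {A : Matrix (Fin m) (Fin m) ℝ} (hA : A.IsHermitian) {t : ℝ}
    (hub : ∀ i, hA.eigenvalues i ≤ t) (v : Fin m → ℝ) :
    v ⬝ᵥ (A *ᵥ v) ≤ t * (v ⬝ᵥ v) := by
  rw [aux_dot_eq_sum_repr hA.eigenvectorBasis v (A *ᵥ v),
    aux_dot_eq_sum_repr hA.eigenvectorBasis v v, Finset.mul_sum]
  refine Finset.sum_le_sum fun i _ => ?_
  rw [aux_repr_mulVec hA v i]
  nlinarith [hub i, mul_self_nonneg (hA.eigenvectorBasis.repr ((WithLp.equiv 2 (Fin m → ℝ)).symm v) i)]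

open Matrix in
lemma aux_mulVec_dot_mulVec_le {m : ℕ} {A : Matrix (Fin m) (Fin m) ℝ} (hA : A.IsHermitian) {t : ℝ}
    (h0 : ∀ i, 0 ≤ hA.eigenvalues i) (hub : ∀ i, hA.eigenvalues i ≤ t) (v : Fin m → ℝ) :
    (A *ᵥ v) ⬝ᵥ (A *ᵥ v) ≤ t ^ 2 * (v ⬝ᵥ v) := by
  rw [aux_dot_eq_sum_repr hA.eigenvectorBasis (A *ᵥ v) (A *ᵥ v),
    aux_dot_eq_sum_repr hA.eigenvectorBasis v v, Finset.mul_sum]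
  refine Finset.sum_le_sum fun i _ => ?_
  rw [aux_repr_mulVec hA v i]
  have hc := mul_self_nonneg (hA.eigenvectorBasis.repr ((WithLp.equiv 2 (Fin m → ℝ)).symm v) i)
  have h1 : 0 ≤ (t - hA.eigenvalues i) * (t + hA.eigenvalues i) :=
    mul_nonneg (by linarith [hub i]) (by linarith [h0 i, hub i])
  nlinarith [mul_nonneg h1 hc]

/-- The `k`-th largest singular value (`k` is 0-indexed, so `σ₁ = singVal U 0`,
`σ₂ = singVal U 1`): the square root of the `k`-th largest eigenvalue of the
Gram matrix `Uᵀ U` (for real matrices `Uᴴ = Uᵀ`). -/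
noncomputable def singVal {α β : Type*} [Fintype α] [Fintype β] [DecidableEq β]
    (U : Matrix α β ℝ) (k : ℕ) : ℝ :=
  Real.sqrt
    (((Finset.univ.val.map
      (show (Matrix.transpose U * U).IsHermitian by
        simpa using Matrix.isHermitian_conjTranspose_mul_self U).eigenvalues).sort (· ≥ ·)).getD k 0)


open Matrix

/-- **"South" boundary (characterization):** for a row-stochastic `n × m` matrix
`U` with `m ≥ n ≥ 2`, `σ₁(U) = √(n/m)` iff every column of `U` sums to `n/m`. -/
theorem singVal_one_eq_sqrt_iff (n m : ℕ) (hn : 2 ≤ n) (hm : n ≤ m)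
    (U : Matrix (Fin n) (Fin m) ℝ)
    (hU : ∀ i j, 0 ≤ U i j) (hUrow : ∀ i, ∑ j, U i j = 1) :
    singVal U 0 = Real.sqrt ((n : ℝ) / (m : ℝ)) ↔
      ∀ j, ∑ i, U i j = (n : ℝ) / (m : ℝ) := by
  classical
  have hA := Matrix.isHermitian_conjTranspose_mul_self U
  have hmpos : (0 : ℝ) < m := by
    have : 0 < m := by omega
    exact_mod_cast this
  -- the sorted list of eigenvalues
  set lam := hA.eigenvalues with hlam
  set l := ((Finset.univ.val.map lam).sort (· ≥ ·)) with hldef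
  have hlen : l.length = m := by
    rw [hldef, Multiset.length_sort]; simp
  have hne : l ≠ [] := by
    intro h; rw [h] at hlen; simp at hlen; omega
  obtain ⟨a, l', hcons⟩ := List.exists_cons_of_ne_nil hne
  have hget : l.getD 0 0 = a := by rw [hcons]; rfl
  have hsing : singVal U 0 = Real.sqrt a := by
    rw [show singVal U 0 = Real.sqrt (l.getD 0 0) from rfl, hget]
  have hmem : ∀ x : ℝ, x ∈ l ↔ ∃ i, lam i = x := by
    intro x
    rw [hldef, Multiset.mem_sort]
    simp [Multiset.mem_map, List.mem_ofFn]
  have h_ex : ∃ i, lam i = a := (hmem a).1 (hcons ▸ (List.mem_cons_self : a ∈ a :: l'))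
  have h_ub : ∀ i, lam i ≤ a := by
    intro i
    have hx : lam i ∈ l := (hmem _).2 ⟨i, rfl⟩
    have hs : l.Pairwise (· ≥ ·) := Multiset.pairwise_sort ..
    rw [hcons, List.pairwise_cons] at hs
    rw [hcons] at hx
    rcases List.mem_cons.1 hx with h | h
    · exact le_of_eq h
    · exact hs.1 _ h
  have h0 : ∀ i, 0 ≤ lam i := fun i =>
    Matrix.eigenvalues_conjTranspose_mul_self_nonneg U i
  have ht0 : 0 ≤ a := h_ex.elim fun i hi => hi ▸ h0 i
  have hnm0 : (0:ℝ) ≤ (n:ℝ)/(m:ℝ) := by positivity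
  -- entries of A
  have hAnn : ∀ j k, 0 ≤ (Uᴴ * U) j k := by
    intro j k
    rw [Matrix.mul_apply]
    exact Finset.sum_nonneg fun i _ => by
      simp [Matrix.conjTranspose_apply]
      exact mul_nonneg (hU i j) (hU i k)
  have hsym := aux_symm_entries hA
  have hArow : ∀ j, ∑ k, (Uᴴ * U) j k = ∑ i, U i j := by
    intro j
    simp only [Matrix.mul_apply, Matrix.conjTranspose_apply, star_trivial]
    rw [Finset.sum_comm]
    refine Finset.sum_congr rfl fun i _ => ?_
    rw [← Finset.mul_sum, hUrow i, mul_one]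
  have hsum_n : ∑ j, ∑ i, U i j = (n : ℝ) := by
    rw [Finset.sum_comm]
    simp [hUrow]
  -- the all-ones vector
  set one : Fin m → ℝ := fun _ => 1 with hone_def
  have honeone : one ⬝ᵥ one = (m : ℝ) := by simp [dotProduct, hone_def]
  have hmv1 : (Uᴴ * U) *ᵥ one = fun j => ∑ i, U i j := by
    funext j
    simp only [Matrix.mulVec, dotProduct, hone_def, mul_one]
    exact hArow j
  have hdot1 : one ⬝ᵥ ((Uᴴ * U) *ᵥ one) = (n : ℝ) := by
    rw [hmv1]
    simp only [dotProduct, hone_def, one_mul]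
    exact hsum_n
  -- lower bound: n/m ≤ a always
  have hlow : (n : ℝ) / (m : ℝ) ≤ a := by
    have h := aux_dot_mulVec_le hA h_ub one
    rw [hdot1, honeone] at h
    rw [div_le_iff₀ hmpos]
    linarith
  constructor
  · -- forward
    intro hEq
    have ha : a = (n : ℝ) / (m : ℝ) := by
      rw [hsing] at hEq
      exact (Real.sqrt_inj ht0 hnm0).1 hEq
    have hB := aux_mulVec_dot_mulVec_le hA h0 h_ub one
    rw [hmv1, honeone, ha] at hB
    have hs2 : ∑ j, (∑ i, U i j) ^ 2 ≤ (n : ℝ)^2 / m := by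
      have : (fun j => ∑ i, U i j) ⬝ᵥ (fun j => ∑ i, U i j) = ∑ j, (∑ i, U i j)^2 := by
        simp [dotProduct, sq]
      rw [this] at hB
      calc ∑ j, (∑ i, U i j) ^ 2 ≤ ((n:ℝ)/m)^2 * m := hB
        _ = (n:ℝ)^2/m := by field_simp
    have hexpand : ∑ j : Fin m, ((∑ i, U i j) - (n:ℝ)/m) ^ 2
        = (∑ j, (∑ i, U i j)^2) - (n:ℝ)^2/m := by
      have e1 : ∑ j : Fin m, ((∑ i, U i j) - (n:ℝ)/m) ^ 2
          = ∑ j : Fin m, ((∑ i, U i j)^2 - 2*((n:ℝ)/m)*(∑ i, U i j) + ((n:ℝ)/m)^2) :=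
        Finset.sum_congr rfl fun j _ => by ring
      rw [e1, Finset.sum_add_distrib, Finset.sum_sub_distrib, ← Finset.mul_sum, hsum_n,
        Finset.sum_const, Finset.card_univ, Fintype.card_fin, nsmul_eq_mul]
      field_simp
      ring
    have hkey : ∑ j : Fin m, ((∑ i, U i j) - (n:ℝ)/m) ^ 2 = 0 := by
      have h1 : ∑ j : Fin m, ((∑ i, U i j) - (n:ℝ)/m) ^ 2 ≤ 0 := by
        rw [hexpand]; linarith
      have h2 : 0 ≤ ∑ j : Fin m, ((∑ i, U i j) - (n:ℝ)/m) ^ 2 :=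
        Finset.sum_nonneg fun j _ => sq_nonneg _
      linarith
    intro j
    have := (Finset.sum_eq_zero_iff_of_nonneg (fun j _ => sq_nonneg _)).1 hkey j (Finset.mem_univ j)
    have := pow_eq_zero_iff (n := 2) (by norm_num) |>.1 this
    linarith [this]
  · -- reverse
    intro hcol
    rw [hsing]
    congr 1
    refine le_antisymm ?_ hlow
    obtain ⟨i0, hi0⟩ := h_ex
    -- the eigenvector
    set w : Fin m → ℝ := (WithLp.equiv 2 (Fin m → ℝ)) (hA.eigenvectorBasis i0) with hwdef
    have hmvw : (Uᴴ * U) *ᵥ w = lam i0 • w := hA.mulVec_eigenvectorBasis i0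
    have hww : w ⬝ᵥ w = 1 := by
      have h1 : w ⬝ᵥ w = (inner ℝ (hA.eigenvectorBasis i0) (hA.eigenvectorBasis i0) : ℝ) := by
        rw [hwdef, EuclideanSpace.inner_eq_star_dotProduct, star_trivial]; rfl
      rw [h1, real_inner_self_eq_norm_sq, hA.eigenvectorBasis.orthonormal.1 i0]
      norm_num
    have hrb := aux_row_bound hsym hAnn (r := (n:ℝ)/m)
      (fun j => (hArow j).trans (hcol j)) w
    rw [hmvw] at hrb
    have : w ⬝ᵥ (lam i0 • w) = lam i0 * (w ⬝ᵥ w) := by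
      simp [dotProduct_smul, smul_eq_mul]
    rw [this, hww] at hrb
    rw [← hi0]
    linarith
end

section
/- Let n = m ≥ 2 and consider the characteristic instances IND_m, SEP_m, CON_m (each an m×m row-stochastic matrix). Then the three pairwise valuation distances are all equal to 2(m − 1): d_v(IND_m, SEP_m) = d_v(IND_m, CON_m) = d_v(SEP_m, CON_m) = 2(m − 1). -/
/-- The indifference instance: every entry equals `1/m`. -/
noncomputable def IND (m : ℕ) : Matrix (Fin m) (Fin m) ℝ :=
  Matrix.of fun _ _ => (1 : ℝ) / m

/-- The separability instance: the identity matrix. -/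
def SEP (m : ℕ) : Matrix (Fin m) (Fin m) ℝ :=
  Matrix.of fun i j => if i = j then 1 else 0

/-- The contention instance: first column all ones, zeros elsewhere. -/
def CON (m : ℕ) : Matrix (Fin m) (Fin m) ℝ :=
  Matrix.of fun _ j => if (j : ℕ) = 0 then 1 else 0

lemma sum_ite_eq_const {m : ℕ} (k : Fin m) (a b : ℝ) :
    ∑ j : Fin m, (if j = k then a else b) = a + ((m : ℝ) - 1) * b := by
  have h : ∀ j : Fin m, (if j = k then a else b) = b + (if j = k then a - b else 0) := by
    intro j; split <;> ring
  simp_rw [h, Finset.sum_add_distrib, Finset.sum_const, Finset.sum_ite_eq',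
    Finset.mem_univ, if_true, Finset.card_univ, Fintype.card_fin, nsmul_eq_mul]
  ring

lemma row_ind {m : ℕ} (hm : 1 ≤ m) (k : Fin m) :
    ∑ j : Fin m, |(1 / m : ℝ) - (if j = k then 1 else 0)| = 2 * ((m : ℝ) - 1) / m := by
  have hm' : (1 : ℝ) ≤ m := by exact_mod_cast hm
  have hmpos : (0 : ℝ) < m := by linarith
  have h : ∀ j : Fin m, |(1 / m : ℝ) - (if j = k then 1 else 0)|
      = if j = k then 1 - 1 / (m:ℝ) else 1 / (m:ℝ) := by
    intro j; split
    · rw [abs_of_nonpos (by rw [sub_nonpos, div_le_one hmpos]; exact hm')]; ring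
    · rw [sub_zero, abs_of_nonneg (by positivity)]
  simp_rw [h, sum_ite_eq_const]
  field_simp
  ring

lemma row_sep {m : ℕ} (i k : Fin m) :
    ∑ j : Fin m, |(if i = j then (1:ℝ) else 0) - (if j = k then 1 else 0)| =
      if i = k then 0 else 2 := by
  by_cases hik : i = k
  · subst hik
    simp only [if_true]
    have h : ∀ j : Fin m, |(if i = j then (1:ℝ) else 0) - (if j = i then 1 else 0)| = 0 := by
      intro j
      by_cases h : i = j
      · subst h; simp
      · rw [if_neg h, if_neg (fun hj => h hj.symm)]; simp
    simp_rw [h, Finset.sum_const_zero]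
  · rw [if_neg hik]
    have h : ∀ j : Fin m, |(if i = j then (1:ℝ) else 0) - (if j = k then 1 else 0)|
        = (if j = i then (1:ℝ) else 0) + (if j = k then 1 else 0) := by
      intro j
      by_cases h1 : i = j
      · subst h1
        simp [hik]
      · rw [if_neg h1, if_neg (fun hj : j = i => h1 hj.symm)]
        by_cases h2 : j = k <;> simp [h2]
    simp_rw [h, Finset.sum_add_distrib, Finset.sum_ite_eq', Finset.mem_univ, if_true]
    norm_num

/-- **The characteristic instances are mutually equidistant:** for `n = m ≥ 2`,
the pairwise valuation distances between `IND`, `SEP`, and `CON` all equal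
`2(m − 1)`. -/
theorem valDist_characteristic_instances (m : ℕ) (hm : 2 ≤ m) :
    valDist (IND m) (SEP m) = 2 * ((m : ℝ) - 1) ∧
    valDist (IND m) (CON m) = 2 * ((m : ℝ) - 1) ∧
    valDist (SEP m) (CON m) = 2 * ((m : ℝ) - 1) := by
  haveI : NeZero m := ⟨by omega⟩
  have hm1 : 1 ≤ m := by omega
  have hm0 : (m : ℝ) ≠ 0 := Nat.cast_ne_zero.mpr (by omega)
  refine ⟨?_, ?_, ?_⟩
  · rw [valDist]
    have hconst : ∀ p : Equiv.Perm (Fin m) × Equiv.Perm (Fin m),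
        ∑ i, ∑ j, |IND m i j - SEP m (p.1 i) (p.2 j)| = 2 * ((m : ℝ) - 1) := by
      intro p
      have hrow : ∀ i, ∑ j, |IND m i j - SEP m (p.1 i) (p.2 j)| = 2 * ((m : ℝ) - 1) / m := by
        intro i
        have h : ∀ j, |IND m i j - SEP m (p.1 i) (p.2 j)|
            = |(1 / m : ℝ) - (if j = p.2.symm (p.1 i) then 1 else 0)| := by
          intro j
          simp only [IND, SEP, Matrix.of_apply]
          congr 1
          congr 1
          simp [Equiv.eq_symm_apply, eq_comm]
        simp_rw [h]
        exact row_ind hm1 _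
      simp_rw [hrow, Finset.sum_const, Finset.card_univ, Fintype.card_fin, nsmul_eq_mul]
      field_simp
    simp_rw [hconst]
    exact ciInf_const
  · rw [valDist]
    have hconst : ∀ p : Equiv.Perm (Fin m) × Equiv.Perm (Fin m),
        ∑ i, ∑ j, |IND m i j - CON m (p.1 i) (p.2 j)| = 2 * ((m : ℝ) - 1) := by
      intro p
      have hrow : ∀ i, ∑ j, |IND m i j - CON m (p.1 i) (p.2 j)| = 2 * ((m : ℝ) - 1) / m := by
        intro i
        have h : ∀ j, |IND m i j - CON m (p.1 i) (p.2 j)|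
            = |(1 / m : ℝ) - (if j = p.2.symm 0 then 1 else 0)| := by
          intro j
          simp only [IND, CON, Matrix.of_apply]
          congr 1
          congr 1
          rw [if_congr (show (↑(p.2 j) = 0) ↔ (j = p.2.symm 0) by
            rw [Equiv.eq_symm_apply, Fin.val_eq_zero_iff]) rfl rfl]
        simp_rw [h]
        exact row_ind hm1 _
      simp_rw [hrow, Finset.sum_const, Finset.card_univ, Fintype.card_fin, nsmul_eq_mul]
      field_simp
    simp_rw [hconst]
    exact ciInf_const
  · rw [valDist]
    have hconst : ∀ p : Equiv.Perm (Fin m) × Equiv.Perm (Fin m),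
        ∑ i, ∑ j, |SEP m i j - CON m (p.1 i) (p.2 j)| = 2 * ((m : ℝ) - 1) := by
      intro p
      have hrow : ∀ i, ∑ j, |SEP m i j - CON m (p.1 i) (p.2 j)|
          = if i = p.2.symm 0 then (0:ℝ) else 2 := by
        intro i
        have h : ∀ j, |SEP m i j - CON m (p.1 i) (p.2 j)|
            = |(if i = j then (1:ℝ) else 0) - (if j = p.2.symm 0 then 1 else 0)| := by
          intro j
          simp only [SEP, CON, Matrix.of_apply]
          congr 2
          rw [if_congr (show (↑(p.2 j) = 0) ↔ (j = p.2.symm 0) by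
            rw [Equiv.eq_symm_apply, Fin.val_eq_zero_iff]) rfl rfl]
        simp_rw [h]
        exact row_sep i _
      simp_rw [hrow, sum_ite_eq_const]
      ring
    simp_rw [hconst]
    exact ciInf_const
end
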